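/- For the scaled two-variable Bleimann–Butzer–Hahn operators T_n with factor u_n and f_3(u,v) = (u/(1+u))^2 + (v/(1+v))^2, one has \sup_{(x,y)\in[0,\infty)^2} |T_n(f_3; x,y) - f_3(x,y)| \le 2(\alpha_n + \beta_n), where \alpha_n = |n(n-1)u_n/(n+1)^2 - 1| and \beta_n = n u_n/(n+1)^2. -/

import Mathlib

open Finset

lemma key_term (n k : ℕ) (hk : k ≤ n) (x : ℝ) (hx : 0 ≤ x) :
    (x/(1+x))^k * (1 - x/(1+x))^(n-k) * (1+x)^n = x^k := by
  have h1 : (0:ℝ) < 1 + x := by linarith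
  have h2 : 1 - x/(1+x) = 1/(1+x) := by field_simp; ring
  rw [h2, show n = k + (n-k) by omega, pow_add, show k + (n-k) - k = n - k by omega]
  rw [div_pow, div_pow, one_pow]
  field_simp

lemma dsum (s t : Finset ℕ) (a p c q : ℕ → ℝ) :
    ∑ k ∈ s, ∑ l ∈ t, (a k + c l) * (p k * q l)
      = (∑ k ∈ s, a k * p k) * (∑ l ∈ t, q l)
        + (∑ k ∈ s, p k) * (∑ l ∈ t, c l * q l) := by
  simp_rw [Finset.sum_mul, Finset.mul_sum, ← Finset.sum_add_distrib]
  exact Finset.sum_congr rfl fun k _ => Finset.sum_congr rfl fun l _ => by ring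

lemma bern0 (n : ℕ) (t : ℝ) :
    ∑ k ∈ range (n+1), (n.choose k : ℝ) * t^k * (1-t)^(n-k) = 1 := by
  have := congrArg (Polynomial.eval t) (bernsteinPolynomial.sum ℝ n)
  simpa [bernsteinPolynomial, Polynomial.eval_finset_sum] using this

lemma bern1 (n : ℕ) (t : ℝ) :
    ∑ k ∈ range (n+1), (k:ℝ) * ((n.choose k : ℝ) * t^k * (1-t)^(n-k)) = n * t := by
  have := congrArg (Polynomial.eval t) (bernsteinPolynomial.sum_smul ℝ n)
  simpa [bernsteinPolynomial, Polynomial.eval_finset_sum, mul_assoc] using this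

lemma bern2 (n : ℕ) (t : ℝ) :
    ∑ k ∈ range (n+1), (k:ℝ) * ((k:ℝ)-1) * ((n.choose k : ℝ) * t^k * (1-t)^(n-k))
      = n * ((n:ℝ)-1) * t^2 := by
  have := congrArg (Polynomial.eval t) (bernsteinPolynomial.sum_mul_smul ℝ n)
  simp only [Polynomial.eval_finset_sum, nsmul_eq_mul, Polynomial.eval_mul,
    Polynomial.eval_pow, Polynomial.eval_X, bernsteinPolynomial,
    Polynomial.eval_natCast, Polynomial.eval_sub, Polynomial.eval_one] at this
  rw [show (n:ℝ) * ((n:ℝ)-1) * t^2 = ((n*(n-1) : ℕ) : ℝ) * t^2 by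
      cases n with
      | zero => simp
      | succ m => push_cast [Nat.succ_sub_one]; ring]
  rw [← this]
  refine Finset.sum_congr rfl fun k _ => ?_
  cases k with
  | zero => simp
  | succ m => push_cast [Nat.succ_sub_one]; ring

lemma S0 (n : ℕ) (x : ℝ) (hx : 0 ≤ x) :
    ∑ k ∈ range (n+1), (n.choose k : ℝ) * x^k = (1+x)^n := by
  calc ∑ k ∈ range (n+1), (n.choose k : ℝ) * x^k
      = ∑ k ∈ range (n+1),
          ((n.choose k : ℝ) * (x/(1+x))^k * (1-(x/(1+x)))^(n-k)) * (1+x)^n := by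
        refine Finset.sum_congr rfl fun k hk => ?_
        have h := key_term n k (Nat.lt_succ_iff.mp (mem_range.mp hk)) x hx
        linear_combination (-(n.choose k : ℝ)) * h
    _ = (1+x)^n := by rw [← Finset.sum_mul, bern0]; ring

lemma S2 (n : ℕ) (x : ℝ) (hx : 0 ≤ x) :
    ∑ k ∈ range (n+1), (k:ℝ)^2 * ((n.choose k : ℝ) * x^k)
      = ((n:ℝ) * (x/(1+x)) + (n:ℝ) * ((n:ℝ)-1) * (x/(1+x))^2) * (1+x)^n := by
  calc ∑ k ∈ range (n+1), (k:ℝ)^2 * ((n.choose k : ℝ) * x^k)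
      = ∑ k ∈ range (n+1),
          ((k:ℝ) * ((n.choose k : ℝ) * (x/(1+x))^k * (1-(x/(1+x)))^(n-k))
            + (k:ℝ) * ((k:ℝ)-1) * ((n.choose k : ℝ) * (x/(1+x))^k * (1-(x/(1+x)))^(n-k)))
          * (1+x)^n := by
        refine Finset.sum_congr rfl fun k hk => ?_
        have h := key_term n k (Nat.lt_succ_iff.mp (mem_range.mp hk)) x hx
        linear_combination (-(k:ℝ)^2*(n.choose k : ℝ)) * h
    _ = ((n:ℝ) * (x/(1+x)) + (n:ℝ) * ((n:ℝ)-1) * (x/(1+x))^2) * (1+x)^n := by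
        rw [← Finset.sum_mul, Finset.sum_add_distrib, bern1, bern2]

lemma fval (n k : ℕ) (hk : k ≤ n) :
    (k:ℝ)/((n:ℝ)-k+1) / (1 + (k:ℝ)/((n:ℝ)-k+1)) = (k:ℝ)/((n:ℝ)+1) := by
  have hkn : (k:ℝ) ≤ n := by exact_mod_cast hk
  have hd : (0:ℝ) < (n:ℝ)-k+1 := by linarith
  have hd2 : (0:ℝ) < 1 + (k:ℝ)/((n:ℝ)-k+1) := by positivity
  have hn1 : (0:ℝ) < (n:ℝ)+1 := by positivity
  field_simp
  ring_nf

/-- The two-variable Bleimann–Butzer–Hahn operators scaled by `u n`. -/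
noncomputable def T (u : ℕ → ℝ) (n : ℕ) (f : ℝ → ℝ → ℝ) (x y : ℝ) : ℝ :=
  u n / ((1 + x) ^ n * (1 + y) ^ n) *
    ∑ k ∈ Finset.range (n + 1), ∑ l ∈ Finset.range (n + 1),
      f ((k : ℝ) / ((n : ℝ) - k + 1)) ((l : ℝ) / ((n : ℝ) - l + 1)) *
        (n.choose k : ℝ) * (n.choose l : ℝ) * x ^ k * y ^ l

lemma Tval (u : ℕ → ℝ) (n : ℕ) (x y : ℝ) (hx : 0 ≤ x) (hy : 0 ≤ y) :
    T u n (fun s t => (s / (1 + s)) ^ 2 + (t / (1 + t)) ^ 2) x y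
      = u n * (((n:ℝ) * (x/(1+x)) + (n:ℝ)*((n:ℝ)-1) * (x/(1+x))^2)
          + ((n:ℝ) * (y/(1+y)) + (n:ℝ)*((n:ℝ)-1) * (y/(1+y))^2)) / ((n:ℝ)+1)^2 := by
  have hPx : (0:ℝ) < (1+x)^n := by positivity
  have hPy : (0:ℝ) < (1+y)^n := by positivity
  have hn1 : (0:ℝ) < ((n:ℝ)+1)^2 := by positivity
  rw [T]
  have hsum : (∑ k ∈ Finset.range (n + 1), ∑ l ∈ Finset.range (n + 1),
      (((k : ℝ) / ((n : ℝ) - k + 1) / (1 + (k : ℝ) / ((n : ℝ) - k + 1)))^2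
        + ((l : ℝ) / ((n : ℝ) - l + 1) / (1 + (l : ℝ) / ((n : ℝ) - l + 1)))^2) *
        (n.choose k : ℝ) * (n.choose l : ℝ) * x ^ k * y ^ l)
    = ∑ k ∈ Finset.range (n + 1), ∑ l ∈ Finset.range (n + 1),
        (((k:ℝ)/((n:ℝ)+1))^2 + ((l:ℝ)/((n:ℝ)+1))^2)
          * (((n.choose k : ℝ) * x^k) * ((n.choose l : ℝ) * y^l)) := by
    refine Finset.sum_congr rfl fun k hk => Finset.sum_congr rfl fun l hl => ?_
    rw [fval n k (Nat.lt_succ_iff.mp (mem_range.mp hk)),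
        fval n l (Nat.lt_succ_iff.mp (mem_range.mp hl))]
    ring
  rw [hsum, dsum, S0 n x hx, S0 n y hy]
  have h2x : ∑ k ∈ range (n+1), ((k:ℝ)/((n:ℝ)+1))^2 * ((n.choose k:ℝ)*x^k)
      = (((n:ℝ) * (x/(1+x)) + (n:ℝ)*((n:ℝ)-1) * (x/(1+x))^2) * (1+x)^n) / ((n:ℝ)+1)^2 := by
    rw [← S2 n x hx, Finset.sum_div]
    exact Finset.sum_congr rfl fun k _ => by rw [div_pow]; ring
  have h2y : ∑ l ∈ range (n+1), ((l:ℝ)/((n:ℝ)+1))^2 * ((n.choose l:ℝ)*y^l)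
      = (((n:ℝ) * (y/(1+y)) + (n:ℝ)*((n:ℝ)-1) * (y/(1+y))^2) * (1+y)^n) / ((n:ℝ)+1)^2 := by
    rw [← S2 n y hy, Finset.sum_div]
    exact Finset.sum_congr rfl fun l _ => by rw [div_pow]; ring
  rw [h2x, h2y]
  field_simp

lemma pointwise (u : ℕ → ℝ) (hu : ∀ n, 0 ≤ u n) (n : ℕ) (x y : ℝ) (hx : 0 ≤ x) (hy : 0 ≤ y) :
    |T u n (fun s t => (s / (1 + s)) ^ 2 + (t / (1 + t)) ^ 2) x y -
          ((x / (1 + x)) ^ 2 + (y / (1 + y)) ^ 2)| ≤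
      2 * (|(n : ℝ) * ((n : ℝ) - 1) * u n / ((n : ℝ) + 1) ^ 2 - 1| +
           (n : ℝ) * u n / ((n : ℝ) + 1) ^ 2) := by
  rw [Tval u n x y hx hy]
  set A := (n : ℝ) * ((n : ℝ) - 1) * u n / ((n : ℝ) + 1) ^ 2 with hA
  set B := (n : ℝ) * u n / ((n : ℝ) + 1) ^ 2 with hB
  set tx := x/(1+x) with htx
  set ty := y/(1+y) with hty
  have htx0 : 0 ≤ tx := div_nonneg hx (by linarith)
  have htx1 : tx ≤ 1 := (div_le_one (by linarith)).mpr (by linarith)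
  have hty0 : 0 ≤ ty := div_nonneg hy (by linarith)
  have hty1 : ty ≤ 1 := (div_le_one (by linarith)).mpr (by linarith)
  have hBnn : 0 ≤ B := by
    exact div_nonneg (mul_nonneg (Nat.cast_nonneg n) (hu n)) (by positivity)
  have heq : u n * (((n:ℝ) * tx + (n:ℝ)*((n:ℝ)-1) * tx^2)
          + ((n:ℝ) * ty + (n:ℝ)*((n:ℝ)-1) * ty^2)) / ((n:ℝ)+1)^2
        - (tx^2 + ty^2)
      = (A - 1) * (tx^2 + ty^2) + B * (tx + ty) := by
    rw [hA, hB]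
    have : ((n:ℝ)+1)^2 ≠ 0 := by positivity
    field_simp
    ring
  rw [heq]
  calc |(A - 1) * (tx^2 + ty^2) + B * (tx + ty)|
      ≤ |(A - 1) * (tx^2 + ty^2)| + |B * (tx + ty)| := abs_add_le _ _
    _ = |A - 1| * (tx^2 + ty^2) + B * (tx + ty) := by
        rw [abs_mul, abs_mul, abs_of_nonneg (by positivity : (0:ℝ) ≤ tx^2+ty^2),
          abs_of_nonneg hBnn, abs_of_nonneg (by positivity : (0:ℝ) ≤ tx+ty)]
    _ ≤ 2 * (|A - 1| + B) := by
        nlinarith [abs_nonneg (A-1), sq_nonneg tx, sq_nonneg ty,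
          mul_le_one₀ htx1 htx0 htx1, mul_le_one₀ hty1 hty0 hty1]


/-- Sup norm on `K = [0,∞)²`. -/
noncomputable def supNorm (g : ℝ → ℝ → ℝ) : ℝ :=
  sSup {m | ∃ x y : ℝ, 0 ≤ x ∧ 0 ≤ y ∧ m = |g x y|}

/-- `‖Tₙ f₃ - f₃‖ ≤ 2(αₙ + βₙ)`. -/
theorem stmt12 (u : ℕ → ℝ) (hu : ∀ n, 0 ≤ u n) (n : ℕ) :
    supNorm (fun x y =>
        T u n (fun s t => (s / (1 + s)) ^ 2 + (t / (1 + t)) ^ 2) x y -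
          ((x / (1 + x)) ^ 2 + (y / (1 + y)) ^ 2)) ≤
      2 * (|(n : ℝ) * ((n : ℝ) - 1) * u n / ((n : ℝ) + 1) ^ 2 - 1| +
           (n : ℝ) * u n / ((n : ℝ) + 1) ^ 2) := by
  have hB : 0 ≤ (n : ℝ) * u n / ((n : ℝ) + 1) ^ 2 :=
    div_nonneg (mul_nonneg (Nat.cast_nonneg n) (hu n)) (by positivity)
  refine Real.sSup_le ?_ (by have := abs_nonneg ((n : ℝ) * ((n : ℝ) - 1) * u n / ((n : ℝ) + 1) ^ 2 - 1); linarith)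
  rintro m ⟨x, y, hx, hy, rfl⟩
  exact pointwise u hu n x y hx hy
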